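/- Adding a single edge to a graph can decrease the partial burning number by at most one: for any edge uv not in E(H) and any X ⊆ V(H), b(H, X) ≤ b(H + uv, X) + 1. -/
import Mathlib


open SimpleGraph

/-- The set of vertices burned after `t` rounds of the burning process on `G`,
where `s i` is the source of fire chosen in round `i + 1`. -/
def burnSet {V : Type*} (G : SimpleGraph V) (s : ℕ → V) : ℕ → Set V
  | 0 => ∅
  | t + 1 => burnSet G s t ∪ {w | ∃ u ∈ burnSet G s t, G.Adj u w} ∪ {s t}

/-- The partial burning number `b(G, S)`: the least number of rounds needed to
burn every vertex of `S`. -/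
noncomputable def pburn {V : Type*} (G : SimpleGraph V) (S : Set V) : ℕ :=
  sInf {r | ∃ s : ℕ → V, S ⊆ burnSet G s r}

/-- The burning number `b(G)`. -/
noncomputable def burn {V : Type*} (G : SimpleGraph V) : ℕ :=
  pburn G Set.univ

/-- The ball of radius `t` around `v` in graph distance. -/
def gball {V : Type*} (G : SimpleGraph V) (v : V) (t : ℕ) : Set V :=
  {w | G.dist v w ≤ t}

/-- The `m × n` Cartesian grid `P_m □ P_n`; the first coordinate is the height (row). -/
def gridGraph (m n : ℕ) : SimpleGraph (Fin m × Fin n) :=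
  (pathGraph m) □ (pathGraph n)

section Aux
variable {V : Type*}

lemma burnSet_subset_succ (G : SimpleGraph V) (s : ℕ → V) (t : ℕ) :
    burnSet G s t ⊆ burnSet G s (t + 1) :=
  fun _ hx => Or.inl (Or.inl hx)

lemma burnSet_mono (G : SimpleGraph V) (s : ℕ → V) {t t' : ℕ} (h : t ≤ t') :
    burnSet G s t ⊆ burnSet G s t' := by
  induction h with
  | refl => exact subset_rfl
  | step _ ih => exact ih.trans (burnSet_subset_succ _ _ _)

lemma source_mem_burnSet (G : SimpleGraph V) (s : ℕ → V) (t : ℕ) :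
    s t ∈ burnSet G s (t + 1) := Or.inr rfl

lemma burnSet_congr (G : SimpleGraph V) {s s' : ℕ → V} {t : ℕ}
    (h : ∀ i < t, s i = s' i) : burnSet G s t = burnSet G s' t := by
  induction t with
  | zero => rfl
  | succ t ih =>
    have ht := ih fun i hi => h i (hi.trans (Nat.lt_succ_self t))
    simp only [burnSet, ht, h t (Nat.lt_succ_self t)]

lemma burnSet_eq_of_not_mem {H G : SimpleGraph V} {u v : V}
    (hHG : H ≤ G)
    (hG : ∀ x w, G.Adj x w → H.Adj x w ∨ (x = u ∧ w = v) ∨ (x = v ∧ w = u))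
    (s : ℕ → V) :
    ∀ t, u ∉ burnSet G s t → v ∉ burnSet G s t →
      burnSet G s (t + 1) = burnSet H s (t + 1) := by
  intro t
  induction t with
  | zero =>
    intro _ _
    simp [burnSet]
  | succ t ih =>
    intro hu hv
    have heq := ih (fun h => hu (burnSet_subset_succ _ _ _ h))
      (fun h => hv (burnSet_subset_succ _ _ _ h))
    have hspread : {w | ∃ x ∈ burnSet G s (t+1), G.Adj x w}
        = {w | ∃ x ∈ burnSet H s (t+1), H.Adj x w} := by
      ext w
      simp only [Set.mem_setOf_eq, ← heq]
      constructor
      · rintro ⟨x, hx, hxw⟩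
        rcases hG x w hxw with h | ⟨rfl, rfl⟩ | ⟨rfl, rfl⟩
        · exact ⟨x, hx, h⟩
        · exact absurd hx hu
        · exact absurd hx hv
      · rintro ⟨x, hx, hxw⟩
        exact ⟨x, hx, hHG hxw⟩
    show burnSet G s (t+1) ∪ _ ∪ _ = burnSet H s (t+1) ∪ _ ∪ _
    rw [hspread, heq]

lemma burnSet_subset_of_shift {H G : SimpleGraph V} {u v : V}
    (hG : ∀ x w, G.Adj x w → H.Adj x w ∨ (x = u ∧ w = v) ∨ (x = v ∧ w = u))
    (s s' : ℕ → V) (t0 : ℕ)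
    (hs : ∀ i, t0 ≤ i → s' (i + 1) = s i)
    (h0 : burnSet G s t0 ⊆ burnSet H s' (t0 + 1))
    (hu : u ∈ burnSet H s' (t0 + 1)) (hv : v ∈ burnSet H s' (t0 + 1)) :
    ∀ t, t0 ≤ t → burnSet G s t ⊆ burnSet H s' (t + 1) := by
  intro t ht
  induction ht with
  | refl => exact h0
  | @step t h ih =>
    have hle : t0 ≤ t + 1 := Nat.le_succ_of_le h
    rintro w ((hw | ⟨x, hx, hxw⟩) | hw)
    · exact burnSet_subset_succ _ _ _ (ih hw)
    · rcases hG x w hxw with hA | ⟨rfl, rfl⟩ | ⟨rfl, rfl⟩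
      · exact Or.inl (Or.inr ⟨x, ih hx, hA⟩)
      · exact burnSet_mono H s' (Nat.succ_le_succ hle) hv
      · exact burnSet_mono H s' (Nat.succ_le_succ hle) hu
    · rw [Set.mem_singleton_iff] at hw
      rw [hw, ← hs t h]
      exact source_mem_burnSet H s' (t + 1)

lemma key_lemma {H G : SimpleGraph V} {u v : V}
    (hG : ∀ x w, G.Adj x w → H.Adj x w ∨ (x = u ∧ w = v) ∨ (x = v ∧ w = u))
    (s : ℕ → V) (t0 r : ℕ) (ht0r : t0 ≤ r)
    (heq : burnSet G s t0 = burnSet H s t0)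
    (hu0 : u ∈ burnSet G s t0) :
    ∃ s' : ℕ → V, burnSet G s r ⊆ burnSet H s' (r + 1) := by
  set s' : ℕ → V := fun i => if i < t0 then s i else if i = t0 then v else s (i - 1)
    with hs'def
  have hcongr : burnSet H s t0 = burnSet H s' t0 :=
    burnSet_congr H (fun i hi => by simp [hs'def, hi])
  have hs't0 : s' t0 = v := by simp [hs'def]
  have hs : ∀ i, t0 ≤ i → s' (i + 1) = s i := by
    intro i hi
    have h1 : ¬ (i + 1 < t0) := by omega
    have h2 : ¬ (i + 1 = t0) := by omega
    simp only [hs'def, if_neg h1, if_neg h2, Nat.add_sub_cancel]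
  refine ⟨s', burnSet_subset_of_shift hG s s' t0 hs ?_ ?_ ?_ r ht0r⟩
  · rw [heq, hcongr]; exact burnSet_subset_succ _ _ _
  · rw [heq, hcongr] at hu0
    exact burnSet_subset_succ _ _ _ hu0
  · rw [← hs't0]
    exact source_mem_burnSet H s' t0

end Aux

/-- Adding a single edge can decrease the partial burning number by at most one:
`b(H, X) ≤ b(H + uv, X) + 1`. -/
theorem pburn_add_edge {V : Type*} [Fintype V] (H : SimpleGraph V) (u v : V)
    (hne : u ≠ v) (hadj : ¬ H.Adj u v) (X : Set V) :
    pburn H X ≤ pburn (H ⊔ SimpleGraph.fromEdgeSet {s(u, v)}) X + 1 := by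
  classical
  set G := H ⊔ SimpleGraph.fromEdgeSet {s(u, v)} with hGdef
  have hHG : H ≤ G := le_sup_left
  have hclass : ∀ x w, G.Adj x w → H.Adj x w ∨ (x = u ∧ w = v) ∨ (x = v ∧ w = u) := by
    intro x w h
    rw [hGdef, SimpleGraph.sup_adj, SimpleGraph.fromEdgeSet_adj] at h
    rcases h with h | ⟨h1, _⟩
    · exact Or.inl h
    · rw [Set.mem_singleton_iff, Sym2.eq_iff] at h1
      tauto
  cases isEmpty_or_nonempty V with
  | inl hV =>
    have hE : {r | ∃ s : ℕ → V, X ⊆ burnSet H s r} = ∅ := by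
      ext r
      simp only [Set.mem_setOf_eq, Set.mem_empty_iff_false, iff_false]
      rintro ⟨s, -⟩
      exact (hV.false (s 0)).elim
    have : pburn H X = 0 := by rw [pburn, hE, Nat.sInf_empty]
    omega
  | inr hV =>
    have hne_set : {r | ∃ s : ℕ → V, X ⊆ burnSet G s r}.Nonempty := by
      obtain ⟨x⟩ := hV
      set n := Fintype.card V with hn
      set e : Fin n ≃ V := (Fintype.equivFin V).symm with he
      refine ⟨n, fun i => if h : i < n then e ⟨i, h⟩ else x, fun w _ => ?_⟩
      obtain ⟨j, rfl⟩ := e.surjective w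
      have hmem : e j ∈ burnSet G (fun i => if h : i < n then e ⟨i, h⟩ else x) (j.1 + 1) := by
        have h := source_mem_burnSet G (fun i => if h : i < n then e ⟨i, h⟩ else x) j.1
        simpa only [dif_pos j.2, Fin.eta] using h
      exact burnSet_mono G _ j.2 hmem
    obtain ⟨s, hsX⟩ : pburn G X ∈ {r | ∃ s : ℕ → V, X ⊆ burnSet G s r} :=
      Nat.sInf_mem hne_set
    set r := pburn G X
    suffices h : ∃ s' : ℕ → V, X ⊆ burnSet H s' (r + 1) by
      obtain ⟨s', hs'⟩ := h
      exact Nat.sInf_le ⟨s', hs'⟩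
    by_cases hcase : u ∈ burnSet G s r ∨ v ∈ burnSet G s r
    · have hPex : ∃ t, u ∈ burnSet G s t ∨ v ∈ burnSet G s t := ⟨r, hcase⟩
      have ht0r : Nat.find hPex ≤ r := Nat.find_le hcase
      have ht0pos : Nat.find hPex ≠ 0 := by
        intro h
        have := Nat.find_spec hPex
        rw [h] at this
        simp only [burnSet] at this
        exact this.elim id id
      obtain ⟨t1, ht1⟩ : ∃ t1, Nat.find hPex = t1 + 1 := ⟨Nat.find hPex - 1, by omega⟩
      have hmin := Nat.find_min hPex (m := t1) (by omega)
      push_neg at hmin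
      have heq : burnSet G s (t1 + 1) = burnSet H s (t1 + 1) :=
        burnSet_eq_of_not_mem hHG hclass s t1 hmin.1 hmin.2
      have hspec := Nat.find_spec hPex
      rw [ht1] at hspec ht0r
      rcases hspec with hu0 | hv0
      · obtain ⟨s', hsub⟩ := key_lemma hclass s (t1 + 1) r ht0r heq hu0
        exact ⟨s', hsX.trans hsub⟩
      · have hclass' : ∀ x w, G.Adj x w → H.Adj x w ∨ (x = v ∧ w = u) ∨ (x = u ∧ w = v) := by
          intro x w h; rcases hclass x w h with h | h | h <;> tauto
        obtain ⟨s', hsub⟩ := key_lemma hclass' s (t1 + 1) r ht0r heq hv0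
        exact ⟨s', hsX.trans hsub⟩
    · push_neg at hcase
      match r, hsX, hcase with
      | 0, hsX, hcase =>
        exact ⟨s, hsX.trans (burnSet_mono H s (Nat.zero_le 1))⟩
      | (t + 1), hsX, hcase =>
        have heq : burnSet G s (t + 1) = burnSet H s (t + 1) :=
          burnSet_eq_of_not_mem hHG hclass s t
            (fun h => hcase.1 (burnSet_subset_succ _ _ _ h))
            (fun h => hcase.2 (burnSet_subset_succ _ _ _ h))
        rw [heq] at hsX
        exact ⟨s, hsX.trans (burnSet_subset_succ _ _ _)⟩
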